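/- Let (R,μ) be a σ-finite measure space, let A and G be Young functions with right-continuous derivatives a and g respectively, let v : (0,∞) → [0,∞] be measurable, and let λ > 0. Then for every μ-measurable function f, ∫₀^∞ G^{-1}(f_*(t)) v(t) dt ≤ ∫₀^∞ g^{-1}(v(t)/(λ a(t))) v(t) dt + λ ∫_R A(|f|) dμ, where G^{-1} and g^{-1} denote left-continuous inverses and f_* is the distribution function of f. -/

import Mathlib

open MeasureTheory Filter Set ENNReal

noncomputable section

/-- A Young function: a convex, non-decreasing, left-continuous function
`A : [0,∞] → [0,∞]` with `A(0) = 0`, `A(0+) = 0` and `A(∞) = ∞`. -/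
structure YoungFunction where
  toFun : ℝ≥0∞ → ℝ≥0∞
  map_zero : toFun 0 = 0
  tendsto_zero : Filter.Tendsto toFun (nhdsWithin 0 (Set.Ioi 0)) (nhds 0)
  mono : Monotone toFun
  convex' : ∀ s t c : ℝ≥0∞, c ≤ 1 →
    toFun (c * s + (1 - c) * t) ≤ c * toFun s + (1 - c) * toFun t
  left_continuous : ∀ t : ℝ≥0∞, 0 < t → toFun t = ⨆ s ∈ Set.Iio t, toFun s
  map_top : toFun ⊤ = ⊤

/-- Left-continuous inverse of a non-decreasing function `F : [0,∞] → [0,∞]`: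
`F⁻¹(t) = inf {τ ≥ 0 : F(τ) ≥ t}`. -/
def leftInvE (F : ℝ≥0∞ → ℝ≥0∞) (t : ℝ≥0∞) : ℝ≥0∞ :=
  sInf {τ : ℝ≥0∞ | t ≤ F τ}

/-- `a` is the right-continuous derivative of the Young function `A`:
`a` is non-decreasing, right-continuous, `a(∞) = ∞`, and
`A(t) = ∫₀ᵗ a(s) ds` for all finite `t ≥ 0`. -/
def IsYoungDerivative (A : YoungFunction) (a : ℝ≥0∞ → ℝ≥0∞) : Prop :=
  Monotone a ∧ a ⊤ = ⊤ ∧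
    (∀ t : ℝ≥0∞, t ≠ ⊤ → Filter.Tendsto a (nhdsWithin t (Set.Ioi t)) (nhds (a t))) ∧
    ∀ t : ℝ, 0 ≤ t →
      A.toFun (ENNReal.ofReal t) = ∫⁻ s in Set.Ioc (0:ℝ) t, a (ENNReal.ofReal s)

/-- The Young conjugate `B̃(t) = sup {s·t − B(s) : s ∈ [0,∞]}`. -/
def youngConj (A : YoungFunction) (t : ℝ≥0∞) : ℝ≥0∞ :=
  ⨆ s : ℝ≥0∞, s * t - A.toFun s

variable {R : Type*} [MeasurableSpace R]

/-- The distribution function `f₊(λ) = μ({x : |f(x)| > λ})`. -/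
def distFn (μ : Measure R) (f : R → ℝ) (lam : ℝ≥0∞) : ℝ≥0∞ :=
  μ {x | lam < ENNReal.ofReal |f x|}

/-- The non-increasing rearrangement `f*(t) = inf {λ ≥ 0 : f₊(λ) ≤ t}`. -/
def rearr (μ : Measure R) (f : R → ℝ) (t : ℝ≥0∞) : ℝ≥0∞ :=
  sInf {lam : ℝ≥0∞ | distFn μ f lam ≤ t}

/-- The Lorentz functional `‖f‖_{p,q}` for `p, q ∈ (0,∞]`. -/
def lorentzNorm (μ : Measure R) (p q : ℝ≥0∞) (f : R → ℝ) : ℝ≥0∞ :=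
  if q = ⊤ then
    ⨆ t : Set.Ioi (0:ℝ), ENNReal.ofReal t.1 ^ (p⁻¹).toReal * rearr μ f (ENNReal.ofReal t.1)
  else
    (∫⁻ t in Set.Ioi (0:ℝ),
        (ENNReal.ofReal t ^ (p⁻¹).toReal * rearr μ f (ENNReal.ofReal t)) ^ q.toReal
          / ENNReal.ofReal t) ^ (q⁻¹).toReal

/-- The Luxemburg norm `‖f‖_A = inf {λ > 0 : ∫ A(|f|/λ) dμ ≤ 1}`. -/
def luxNorm (μ : Measure R) (A : YoungFunction) (f : R → ℝ) : ℝ≥0∞ :=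
  sInf {lam : ℝ≥0∞ | 0 < lam ∧ ∫⁻ x, A.toFun (ENNReal.ofReal |f x| / lam) ∂μ ≤ 1}

/-- The measure `μ` is non-atomic: every set of positive measure has a subset
of strictly smaller positive measure. -/
def NonAtomic (μ : Measure R) : Prop :=
  ∀ s : Set R, MeasurableSet s → 0 < μ s →
    ∃ t, t ⊆ s ∧ MeasurableSet t ∧ 0 < μ t ∧ μ t < μ s

/-- The almost-compact embedding `X ↪* Y`, for (quasi)norm functionals `NX`, `NY`:
`X ⊂ Y` and for every sequence of measurable sets `Eₙ` whose characteristic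
functions tend to `0` a.e., `sup_{‖f‖_X ≤ 1} ‖f χ_{Eₙ}‖_Y → 0`. -/
def AlmostCompactEmbedding (μ : Measure R) (NX NY : (R → ℝ) → ℝ≥0∞) : Prop :=
  (∀ f : R → ℝ, Measurable f → NX f < ⊤ → NY f < ⊤) ∧
    ∀ E : ℕ → Set R, (∀ n, MeasurableSet (E n)) →
      (∀ᵐ x ∂μ, Filter.Tendsto (fun n => (E n).indicator (fun _ => (1:ℝ)) x)
        Filter.atTop (nhds 0)) →
      Filter.Tendsto
        (fun n => ⨆ f : {f : R → ℝ // Measurable f ∧ NX f ≤ 1},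
          NY ((E n).indicator f.1)) Filter.atTop (nhds 0)

/-- The continuous embedding `X ↪ Y`: there is `C > 0` with `‖f‖_Y ≤ C ‖f‖_X`. -/
def NormEmbedding (μ : Measure R) (NX NY : (R → ℝ) → ℝ≥0∞) : Prop :=
  ∃ C : ℝ, 0 < C ∧ ∀ f : R → ℝ, Measurable f → NY f ≤ ENNReal.ofReal C * NX f
lemma leftInvE_mono (F : ℝ≥0∞ → ℝ≥0∞) : Monotone (leftInvE F) := by
  intro s t hst
  exact sInf_le_sInf (fun τ (hτ : t ≤ F τ) => hst.trans hτ)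

lemma leftInvE_zero (F : ℝ≥0∞ → ℝ≥0∞) : leftInvE F 0 = 0 := by
  simp [leftInvE]

/-- `G(G⁻¹(y)) ≤ y` for a left-continuous Young function. -/
lemma young_comp_le (G : YoungFunction) (y : ℝ≥0∞) :
    G.toFun (leftInvE G.toFun y) ≤ y := by
  set x := leftInvE G.toFun y with hx
  rcases eq_or_lt_of_le (zero_le : 0 ≤ x) with h0 | h0
  · rw [← h0, G.map_zero]; exact (zero_le : 0 ≤ y)
  · rw [G.left_continuous x h0]
    refine iSup₂_le fun s hs => ?_
    by_contra hcon
    push_neg at hcon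
    have : x ≤ s := sInf_le (le_of_lt hcon)
    exact absurd hs (not_lt.mpr this)

/-- If `g ≥ w` beyond `z`, then `G(u) ≥ (u-z)·w` for finite `u > z`. -/
lemma integral_tail_le (G : YoungFunction) (g : ℝ≥0∞ → ℝ≥0∞)
    (hg : IsYoungDerivative G g) {z u w : ℝ≥0∞} (hzu : z < u) (hu : u ≠ ⊤)
    (hw : ∀ σ, z < σ → w ≤ g σ) : (u - z) * w ≤ G.toFun u := by
  have hz : z ≠ ⊤ := (hzu.trans_le le_top).ne
  have hrep := hg.2.2.2 u.toReal ENNReal.toReal_nonneg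
  rw [ENNReal.ofReal_toReal hu] at hrep
  rw [hrep]
  have hga : Measurable fun s : ℝ => g (ENNReal.ofReal s) :=
    (hg.1.measurable).comp ENNReal.measurable_ofReal
  have hcalc : (u - z) * w ≤ ∫⁻ s in Set.Ioc z.toReal u.toReal, g (ENNReal.ofReal s) := by
    have h1 : (u - z) * w = w * volume (Set.Ioc z.toReal u.toReal) := by
      rw [Real.volume_Ioc, ENNReal.ofReal_sub _ ENNReal.toReal_nonneg,
        ENNReal.ofReal_toReal hu, ENNReal.ofReal_toReal hz, mul_comm]
    rw [h1, ← setLIntegral_const]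
    refine setLIntegral_mono hga fun s hs => ?_
    refine hw _ ?_
    calc z = ENNReal.ofReal z.toReal := (ENNReal.ofReal_toReal hz).symm
    _ < ENNReal.ofReal s :=
        (ENNReal.ofReal_lt_ofReal_iff_of_nonneg ENNReal.toReal_nonneg).mpr hs.1
  refine hcalc.trans (lintegral_mono' (Measure.restrict_mono ?_ le_rfl) le_rfl)
  exact Set.Ioc_subset_Ioc_left ENNReal.toReal_nonneg

/-- Young's rectangle inequality `u·w ≤ g⁻¹(w)·w + G(u)`. -/
lemma young_rect (G : YoungFunction) (g : ℝ≥0∞ → ℝ≥0∞)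
    (hg : IsYoungDerivative G g) (u w : ℝ≥0∞) :
    u * w ≤ leftInvE g w * w + G.toFun u := by
  rcases eq_or_ne u ⊤ with hu | hu
  · rw [hu, G.map_top]; simp
  set z := leftInvE g w with hz
  rcases le_or_gt u z with h | h
  · exact le_add_right (mul_le_mul_left h w)
  · have hw : ∀ σ, z < σ → w ≤ g σ := by
      intro σ hσ
      obtain ⟨τ, hτmem, hτlt⟩ := sInf_lt_iff.mp hσ
      exact le_trans hτmem (hg.1 hτlt.le)
    have hle := integral_tail_le G g hg h hu hw
    calc u * w = (z + (u - z)) * w := by rw [add_tsub_cancel_of_le h.le]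
    _ = z * w + (u - z) * w := by rw [add_mul]
    _ ≤ z * w + G.toFun u := add_le_add le_rfl hle

/-- The key pointwise inequality `G⁻¹(d)·V ≤ g⁻¹(V/L)·V + L·d`. -/
lemma key_pointwise (G : YoungFunction) (g : ℝ≥0∞ → ℝ≥0∞)
    (hg : IsYoungDerivative G g) (d V L : ℝ≥0∞) :
    leftInvE G.toFun d * V ≤ leftInvE g (V / L) * V + L * d := by
  rcases eq_or_ne L 0 with hL | hL
  · subst hL
    rcases eq_or_ne V 0 with hV | hV
    · simp [hV]
    · rw [ENNReal.div_zero hV]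
      refine le_add_right (mul_le_mul_left ?_ V)
      set τ0 := leftInvE g ⊤ with hτ0
      rcases eq_or_ne τ0 ⊤ with h | h
      · rw [h]; exact le_top
      · have hsub : Set.Ioo τ0 ⊤ ⊆ {τ | d ≤ G.toFun τ} := by
          intro τ hτ
          have hw : ∀ σ, τ0 < σ → (⊤ : ℝ≥0∞) ≤ g σ := by
            intro σ hσ
            obtain ⟨τ', hτ'mem, hτ'lt⟩ := sInf_lt_iff.mp hσ
            exact le_trans hτ'mem (hg.1 hτ'lt.le)
          have hle := integral_tail_le G g hg hτ.1 hτ.2.ne hw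
          have hne : τ - τ0 ≠ 0 := by
            simpa [tsub_eq_zero_iff_le, not_le] using hτ.1
          rw [ENNReal.mul_top hne] at hle
          exact le_trans le_top hle
        calc leftInvE G.toFun d ≤ sInf (Set.Ioo τ0 ⊤) := sInf_le_sInf hsub
        _ = τ0 := csInf_Ioo (lt_top_iff_ne_top.mpr h)
  rcases eq_or_ne L ⊤ with hL' | hL'
  · rcases eq_or_ne d 0 with hd | hd
    · rw [hd, leftInvE_zero]; simp
    · rw [hL', ENNReal.top_mul hd, add_top]; exact le_top
  · have h1 : L * (V / L) = V := ENNReal.mul_div_cancel hL hL'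
    have h2 := young_rect G g hg (leftInvE G.toFun d) (V / L)
    have h3 := young_comp_le G d
    calc leftInvE G.toFun d * V = L * (leftInvE G.toFun d * (V / L)) := by
          rw [mul_left_comm, h1]
    _ ≤ L * (leftInvE g (V / L) * (V / L) + G.toFun (leftInvE G.toFun d)) :=
        mul_le_mul_right h2 L
    _ ≤ L * (leftInvE g (V / L) * (V / L) + d) :=
        mul_le_mul_right (add_le_add le_rfl h3) L
    _ = leftInvE g (V / L) * V + L * d := by
        rw [mul_add, mul_left_comm, h1]

/-- The layer-cake bound `∫₀^∞ a(t) f₊(t) dt ≤ ∫ A(|f|) dμ`. -/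
lemma layer_cake {R : Type*} [MeasurableSpace R] (μ : Measure R) [SigmaFinite μ]
    (A : YoungFunction) (a : ℝ≥0∞ → ℝ≥0∞) (ha : IsYoungDerivative A a)
    (f : R → ℝ) (hf : Measurable f) :
    ∫⁻ t in Set.Ioi (0:ℝ), a (ENNReal.ofReal t) * distFn μ f (ENNReal.ofReal t)
      ≤ ∫⁻ x, A.toFun (ENNReal.ofReal |f x|) ∂μ := by
  have ha_meas : Measurable fun t : ℝ => a (ENNReal.ofReal t) :=
    (ha.1.measurable).comp ENNReal.measurable_ofReal
  set F : ℝ → R → ℝ≥0∞ :=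
    fun t x => Set.indicator (Set.Iio |f x|) (fun s => a (ENNReal.ofReal s)) t with hF
  have hFm : Measurable (Function.uncurry F) := by
    have : Function.uncurry F =
        Set.indicator {p : ℝ × R | p.1 < |f p.2|} (fun p => a (ENNReal.ofReal p.1)) := by
      funext p
      simp [hF, Function.uncurry, Set.indicator_apply, Set.mem_setOf_eq]
    rw [this]
    exact Measurable.indicator (ha_meas.comp measurable_fst)
      (measurableSet_lt measurable_fst ((hf.abs).comp measurable_snd))
  have hstep1 : ∫⁻ t in Set.Ioi (0:ℝ), a (ENNReal.ofReal t) * distFn μ f (ENNReal.ofReal t)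
      = ∫⁻ t in Set.Ioi (0:ℝ), ∫⁻ x, F t x ∂μ := by
    refine setLIntegral_congr_fun measurableSet_Ioi (fun t ht => ?_)
    have hset : {x | ENNReal.ofReal t < ENNReal.ofReal |f x|} = {x | t < |f x|} := by
      ext x
      exact ENNReal.ofReal_lt_ofReal_iff_of_nonneg (le_of_lt ht)
    have hFt : ∀ x, F t x = Set.indicator {x | t < |f x|}
        (fun _ => a (ENNReal.ofReal t)) x := by
      intro x
      simp [hF, Set.indicator_apply, Set.mem_setOf_eq]
    rw [distFn, hset]
    simp_rw [hFt]
    rw [lintegral_indicator_const (measurableSet_lt measurable_const hf.abs)]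
  have hstep2 : ∫⁻ t in Set.Ioi (0:ℝ), ∫⁻ x, F t x ∂μ
      = ∫⁻ x, (∫⁻ t in Set.Ioi (0:ℝ), F t x) ∂μ :=
    lintegral_lintegral_swap hFm.aemeasurable
  have hstep3 : ∀ x, (∫⁻ t in Set.Ioi (0:ℝ), F t x) = A.toFun (ENNReal.ofReal |f x|) := by
    intro x
    rw [hF]
    rw [lintegral_indicator measurableSet_Iio, Measure.restrict_restrict measurableSet_Iio,
      Set.Iio_inter_Ioi, Measure.restrict_congr_set Ioo_ae_eq_Ioc]
    exact (ha.2.2.2 |f x| (abs_nonneg _)).symm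
  rw [hstep1, hstep2]
  simp_rw [hstep3]
  exact le_rfl

/-- A Young-type inequality: for Young functions `A`, `G` with
right-continuous derivatives `a`, `g`, a measurable weight `v` and `λ > 0`,
`∫₀^∞ G⁻¹(f₊(t)) v(t) dt ≤ ∫₀^∞ g⁻¹(v(t)/(λ a(t))) v(t) dt + λ ∫ A(|f|) dμ`. -/
theorem young_type_inequality
    {R : Type*} [MeasurableSpace R] (μ : Measure R) [SigmaFinite μ]
    (A G : YoungFunction) (a g : ℝ≥0∞ → ℝ≥0∞)
    (ha : IsYoungDerivative A a) (hg : IsYoungDerivative G g)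
    (v : ℝ → ℝ≥0∞) (hv : Measurable v) (lam : ℝ) (hlam : 0 < lam)
    (f : R → ℝ) (hf : Measurable f) :
    ∫⁻ t in Set.Ioi (0:ℝ), leftInvE G.toFun (distFn μ f (ENNReal.ofReal t)) * v t ≤
      (∫⁻ t in Set.Ioi (0:ℝ),
        leftInvE g (v t / (ENNReal.ofReal lam * a (ENNReal.ofReal t))) * v t)
        + ENNReal.ofReal lam * ∫⁻ x, A.toFun (ENNReal.ofReal |f x|) ∂μ := by
  have ha_meas : Measurable fun t : ℝ => a (ENNReal.ofReal t) :=
    (ha.1.measurable).comp ENNReal.measurable_ofReal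
  have hP_meas : Measurable fun t : ℝ =>
      leftInvE g (v t / (ENNReal.ofReal lam * a (ENNReal.ofReal t))) * v t :=
    (((leftInvE_mono g).measurable).comp (hv.div (measurable_const.mul ha_meas))).mul hv
  calc ∫⁻ t in Set.Ioi (0:ℝ), leftInvE G.toFun (distFn μ f (ENNReal.ofReal t)) * v t
      ≤ ∫⁻ t in Set.Ioi (0:ℝ),
          (leftInvE g (v t / (ENNReal.ofReal lam * a (ENNReal.ofReal t))) * v t
            + (ENNReal.ofReal lam * a (ENNReal.ofReal t)) * distFn μ f (ENNReal.ofReal t)) :=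
        lintegral_mono fun t => key_pointwise G g hg _ _ _
  _ = (∫⁻ t in Set.Ioi (0:ℝ),
        leftInvE g (v t / (ENNReal.ofReal lam * a (ENNReal.ofReal t))) * v t)
      + ∫⁻ t in Set.Ioi (0:ℝ),
          (ENNReal.ofReal lam * a (ENNReal.ofReal t)) * distFn μ f (ENNReal.ofReal t) :=
      lintegral_add_left hP_meas _
  _ ≤ (∫⁻ t in Set.Ioi (0:ℝ),
        leftInvE g (v t / (ENNReal.ofReal lam * a (ENNReal.ofReal t))) * v t)
      + ENNReal.ofReal lam * ∫⁻ x, A.toFun (ENNReal.ofReal |f x|) ∂μ := by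
      refine add_le_add le_rfl ?_
      simp_rw [mul_assoc]
      rw [lintegral_const_mul' _ _ ENNReal.ofReal_ne_top]
      exact mul_le_mul_right (layer_cake μ A a ha f hf) _
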